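/- Let p ∈ ℝ² and let F : ℝ² → ℂ be continuously differentiable and non-vanishing on a punctured neighborhood of p. Define the local wavenumber k(x,t) = Im(conj(F(x,t))·∂ₓF(x,t))/|F(x,t)|² and the local frequency ω(x,t) = −Im(conj(F(x,t))·∂ₜF(x,t))/|F(x,t)|². If k and ω are bounded on the punctured neighborhood, then the dislocation strength integral I(ε) = ∫₀^{2π} Im(conj(F(γ_ε(θ)))·(d/dθ)F(γ_ε(θ)))/|F(γ_ε(θ))|² dθ, taken along the circle γ_ε(θ) = p + ε(cos θ, sin θ), tends to 0 as ε → 0⁺. In particular, no wavefront dislocation occurs at p. -/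

import Mathlib

open Real Filter Topology

/-- If the local wavenumber and local frequency of a wave field `F`
are bounded on a punctured neighborhood of `p`, then the dislocation strength
integral along small circles around `p` tends to `0` as the radius shrinks:
no wavefront dislocation occurs at `p`. -/
theorem no_dislocation_of_bounded_wavenumber_frequency
    (p : ℝ × ℝ) (F : ℝ × ℝ → ℂ) (r : ℝ) (hr : 0 < r)
    (hF : ContDiffOn ℝ 1 F (Metric.ball p r \ {p}))
    (hFne : ∀ q ∈ Metric.ball p r \ {p}, F q ≠ 0)
    (M : ℝ)
    (hk : ∀ q ∈ Metric.ball p r \ {p},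
      |((starRingEnd ℂ) (F q) * fderiv ℝ F q (1, 0)).im / ‖F q‖ ^ 2| ≤ M)
    (hω : ∀ q ∈ Metric.ball p r \ {p},
      |(-((starRingEnd ℂ) (F q) * fderiv ℝ F q (0, 1)).im) / ‖F q‖ ^ 2| ≤ M) :
    Tendsto (fun ε : ℝ =>
      ∫ θ in (0:ℝ)..(2 * Real.pi),
        ((starRingEnd ℂ) (F (p + ε • (Real.cos θ, Real.sin θ))) *
          deriv (fun θ' : ℝ => F (p + ε • (Real.cos θ', Real.sin θ'))) θ).im /
        ‖F (p + ε • (Real.cos θ, Real.sin θ))‖ ^ 2)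
      (𝓝[>] (0:ℝ)) (𝓝 0) := by
  have hopen : IsOpen (Metric.ball p r \ {p}) :=
    Metric.isOpen_ball.sdiff isClosed_singleton
  -- the bounding function
  have hg : Tendsto (fun ε : ℝ => 2 * M * ε * (2 * Real.pi)) (𝓝[>] (0:ℝ)) (𝓝 0) := by
    have : Tendsto (fun ε : ℝ => 2 * M * ε * (2 * Real.pi)) (𝓝 (0:ℝ))
        (𝓝 (2 * M * 0 * (2 * Real.pi))) := by
      exact (tendsto_id.const_mul (2 * M)).mul_const _
    simpa using this.mono_left nhdsWithin_le_nhds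
  apply squeeze_zero_norm' _ hg
  filter_upwards [Ioo_mem_nhdsGT_of_mem (Set.mem_Ico.mpr ⟨le_refl (0:ℝ), hr⟩)] with ε hε
  obtain ⟨hε0, hεr⟩ := hε
  -- pointwise bound of the integrand
  have key : ∀ θ : ℝ,
      |((starRingEnd ℂ) (F (p + ε • (Real.cos θ, Real.sin θ))) *
          deriv (fun θ' : ℝ => F (p + ε • (Real.cos θ', Real.sin θ'))) θ).im /
        ‖F (p + ε • (Real.cos θ, Real.sin θ))‖ ^ 2| ≤ 2 * M * ε := by
    intro θ
    set q : ℝ × ℝ := p + ε • (Real.cos θ, Real.sin θ) with hq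
    have hqmem : q ∈ Metric.ball p r \ {p} := by
      constructor
      · rw [Metric.mem_ball]
        have hdist : dist q p = ε * ‖((Real.cos θ, Real.sin θ) : ℝ × ℝ)‖ := by
          rw [hq, dist_eq_norm, add_sub_cancel_left, norm_smul, Real.norm_eq_abs,
            abs_of_pos hε0]
        have hnle : ‖((Real.cos θ, Real.sin θ) : ℝ × ℝ)‖ ≤ 1 := by
          rw [Prod.norm_def]
          exact max_le (by simpa [Real.norm_eq_abs] using Real.abs_cos_le_one θ)
            (by simpa [Real.norm_eq_abs] using Real.abs_sin_le_one θ)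
        calc dist q p ≤ ε * 1 := by rw [hdist]; exact mul_le_mul_of_nonneg_left hnle hε0.le
          _ < r := by linarith
      · simp only [Set.mem_singleton_iff, hq]
        intro h
        have hv : ε • ((Real.cos θ, Real.sin θ) : ℝ × ℝ) = 0 := by
          have := h
          rwa [add_eq_left] at this
        rcases smul_eq_zero.mp hv with h1 | h2
        · exact hε0.ne' h1
        · have hc : Real.cos θ = 0 := congrArg Prod.fst h2
          have hs : Real.sin θ = 0 := congrArg Prod.snd h2
          have := Real.sin_sq_add_cos_sq θ
          rw [hc, hs] at this; norm_num at this
    have hdF : DifferentiableAt ℝ F q :=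
      (hF.contDiffAt (hopen.mem_nhds hqmem)).differentiableAt one_ne_zero
    -- derivative of the circle parametrization
    have hcirc : HasDerivAt (fun θ' : ℝ => p + ε • ((Real.cos θ', Real.sin θ') : ℝ × ℝ))
        (ε • ((-Real.sin θ, Real.cos θ) : ℝ × ℝ)) θ := by
      have h1 : HasDerivAt (fun θ' : ℝ => ((Real.cos θ', Real.sin θ') : ℝ × ℝ))
          ((-Real.sin θ, Real.cos θ) : ℝ × ℝ) θ :=
        HasDerivAt.prodMk (Real.hasDerivAt_cos θ) (Real.hasDerivAt_sin θ)
      exact (h1.const_smul ε).const_add p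
    have hcomp : HasDerivAt (fun θ' : ℝ => F (p + ε • (Real.cos θ', Real.sin θ')))
        (fderiv ℝ F q (ε • ((-Real.sin θ, Real.cos θ) : ℝ × ℝ))) θ :=
      hdF.hasFDerivAt.comp_hasDerivAt θ hcirc
    rw [hcomp.deriv]
    -- decompose the direction
    have hdir : (ε • ((-Real.sin θ, Real.cos θ) : ℝ × ℝ))
        = ε • ((-Real.sin θ) • ((1, 0) : ℝ × ℝ) + (Real.cos θ) • ((0, 1) : ℝ × ℝ)) := by
      simp [Prod.ext_iff]
    rw [hdir, map_smul, map_add, map_smul, map_smul]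
    set A : ℂ := fderiv ℝ F q (1, 0)
    set B : ℂ := fderiv ℝ F q (0, 1)
    have him : ((starRingEnd ℂ) (F q) *
        (ε • ((-Real.sin θ) • A + (Real.cos θ) • B))).im
        = ε * ((-Real.sin θ) * ((starRingEnd ℂ) (F q) * A).im
            + (Real.cos θ) * ((starRingEnd ℂ) (F q) * B).im) := by
      rw [mul_smul_comm, mul_add, mul_smul_comm, mul_smul_comm]
      simp only [Complex.smul_im, Complex.add_im, smul_eq_mul]
    rw [him]
    have hA : |((starRingEnd ℂ) (F q) * A).im / ‖F q‖ ^ 2| ≤ M := hk q hqmem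
    have hB : |((starRingEnd ℂ) (F q) * B).im / ‖F q‖ ^ 2| ≤ M := by
      have := hω q hqmem
      rwa [neg_div, abs_neg] at this
    have hexp : ε * ((-Real.sin θ) * ((starRingEnd ℂ) (F q) * A).im
            + (Real.cos θ) * ((starRingEnd ℂ) (F q) * B).im) / ‖F q‖ ^ 2
        = ε * ((-Real.sin θ) * (((starRingEnd ℂ) (F q) * A).im / ‖F q‖ ^ 2)
            + (Real.cos θ) * (((starRingEnd ℂ) (F q) * B).im / ‖F q‖ ^ 2)) := by
      ring
    rw [hexp, abs_mul, abs_of_pos hε0]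
    have : |(-Real.sin θ) * (((starRingEnd ℂ) (F q) * A).im / ‖F q‖ ^ 2)
            + (Real.cos θ) * (((starRingEnd ℂ) (F q) * B).im / ‖F q‖ ^ 2)| ≤ 2 * M := by
      calc _ ≤ |(-Real.sin θ) * (((starRingEnd ℂ) (F q) * A).im / ‖F q‖ ^ 2)|
              + |(Real.cos θ) * (((starRingEnd ℂ) (F q) * B).im / ‖F q‖ ^ 2)| := abs_add_le _ _
        _ ≤ 1 * M + 1 * M := by
            apply add_le_add
            · rw [abs_mul]
              exact mul_le_mul (by simpa using Real.abs_sin_le_one θ) hA (abs_nonneg _)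
                zero_le_one
            · rw [abs_mul]
              exact mul_le_mul (Real.abs_cos_le_one θ) hB (abs_nonneg _) zero_le_one
        _ = 2 * M := by ring
    calc ε * |_| ≤ ε * (2 * M) := mul_le_mul_of_nonneg_left this hε0.le
      _ = 2 * M * ε := by ring
  -- bound the integral
  have hbound := intervalIntegral.norm_integral_le_of_norm_le_const
    (f := fun θ : ℝ =>
      ((starRingEnd ℂ) (F (p + ε • (Real.cos θ, Real.sin θ))) *
          deriv (fun θ' : ℝ => F (p + ε • (Real.cos θ', Real.sin θ'))) θ).im /
        ‖F (p + ε • (Real.cos θ, Real.sin θ))‖ ^ 2)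
    (a := 0) (b := 2 * Real.pi) (C := 2 * M * ε)
    (fun θ _ => by rw [Real.norm_eq_abs]; exact key θ)
  calc _ ≤ 2 * M * ε * |2 * Real.pi - 0| := hbound
    _ = 2 * M * ε * (2 * Real.pi) := by
        rw [sub_zero, abs_of_pos (by positivity)]
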